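/- arXiv:math/0412560 — 3 statements merged into one kernel-verified Lean document; each statement's English description precedes it below -/
import Mathlib

section
/- Let S be a topological space, Y a real topological vector space with topological dual Y*, and A: S → Y* a weakly-star continuous map. Then the set {(s,y) ∈ S × Y : A(s)(y) = 1} is disconnected if and only if S \ A⁻¹(0) is disconnected. -/
/-- (Ricceri) Let `S` be a topological space, `Y` a real topological vector
space and `A : S → Y*` weakly-star continuous. Then `{(s,y) : A(s)(y) = 1}`
is disconnected iff `S \ A⁻¹(0)` is disconnected. -/
theorem disconnected_level_set_iff
    (S : Type*) [TopologicalSpace S]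
    (Y : Type*) [AddCommGroup Y] [Module ℝ Y] [TopologicalSpace Y]
    [IsTopologicalAddGroup Y] [ContinuousSMul ℝ Y]
    (A : S → WeakDual ℝ Y) (hA : Continuous A) :
    ¬ IsConnected {p : S × Y | A p.1 p.2 = 1} ↔
      ¬ IsConnected {s : S | A s ≠ 0} := by
  rw [not_iff_not]
  -- basic facts
  have hfiber : ∀ s : S, A s ≠ 0 → ∃ y : Y, A s y = 1 := by
    intro s hs
    obtain ⟨y, hy⟩ : ∃ y, A s y ≠ 0 := by
      by_contra h; push_neg at h
      exact hs (ContinuousLinearMap.ext fun y => by exact h y)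
    refine ⟨(A s y)⁻¹ • y, ?_⟩
    rw [map_smul, smul_eq_mul, inv_mul_cancel₀ hy]
  have hmem : ∀ p : S × Y, A p.1 p.2 = 1 → A p.1 ≠ 0 := by
    intro p hp h0
    rw [h0] at hp
    exact zero_ne_one ((show (0 : WeakDual ℝ Y) p.2 = 0 from rfl).symm.trans hp)
  have himg : {s : S | A s ≠ 0} = Prod.fst '' {p : S × Y | A p.1 p.2 = 1} := by
    ext s
    constructor
    · intro hs
      obtain ⟨y, hy⟩ := hfiber s hs
      exact ⟨(s, y), hy, rfl⟩
    · rintro ⟨⟨s', y⟩, hp, rfl⟩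
      exact hmem _ hp
  have heval : ∀ y : Y, Continuous fun s : S => A s y := by
    intro y
    exact (WeakDual.eval_continuous (𝕜 := ℝ) (y := y)).comp hA
  constructor
  · -- level set connected → slice connected
    intro hE
    rw [himg]
    exact hE.image _ continuous_fst.continuousOn
  · -- slice connected → level set connected
    intro hU
    obtain ⟨s₀, hs₀⟩ := hU.nonempty
    obtain ⟨y₀, hy₀⟩ := hfiber s₀ hs₀
    refine ⟨⟨(s₀, y₀), hy₀⟩, ?_⟩
    intro u v hu hv hcov ⟨p, hpE, hpu⟩ ⟨q, hqE, hqv⟩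
    -- the "meets w" sets are open
    have key : ∀ w : Set (S × Y), IsOpen w →
        IsOpen {s : S | ∃ y : Y, A s y = 1 ∧ (s, y) ∈ w} := by
      intro w hw
      rw [isOpen_iff_mem_nhds]
      rintro s ⟨y, hy, hyw⟩
      have hne : A s y ≠ 0 := by rw [hy]; exact one_ne_zero
      have hg : ContinuousAt (fun t : S => (t, (A t y)⁻¹ • y)) s := by
        refine ContinuousAt.prodMk continuousAt_id ?_
        exact (((heval y).continuousAt).inv₀ hne).smul continuousAt_const
      have hmemw : (fun t : S => (t, (A t y)⁻¹ • y)) s ∈ w := by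
        simpa [hy] using hyw
      have h1 : (fun t : S => (t, (A t y)⁻¹ • y)) ⁻¹' w ∈ nhds s :=
        hg.preimage_mem_nhds (hw.mem_nhds hmemw)
      have h2 : {t : S | A t y ≠ 0} ∈ nhds s :=
        ((isOpen_compl_singleton.preimage (heval y)).mem_nhds hne)
      filter_upwards [h1, h2] with t htw htne
      refine ⟨(A t y)⁻¹ • y, ?_, htw⟩
      rw [map_smul, smul_eq_mul, inv_mul_cancel₀ htne]
    -- apply preconnectedness of the slice
    obtain ⟨s, hsU, hsB, hsC⟩ := hU.isPreconnected
      {s : S | ∃ y : Y, A s y = 1 ∧ (s, y) ∈ u}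
      {s : S | ∃ y : Y, A s y = 1 ∧ (s, y) ∈ v}
      (key u hu) (key v hv)
      (by
        intro s hs
        obtain ⟨y, hy⟩ := hfiber s hs
        rcases hcov (show A (s, y).1 (s, y).2 = 1 from hy) with h | h
        · exact Or.inl ⟨y, hy, h⟩
        · exact Or.inr ⟨y, hy, h⟩)
      ⟨p.1, hmem p hpE, p.2, hpE, hpu⟩
      ⟨q.1, hmem q hqE, q.2, hqE, hqv⟩
    obtain ⟨y₁, hy₁, hy₁u⟩ := hsB
    obtain ⟨y₂, hy₂, hy₂v⟩ := hsC
    -- the fiber over s is convex hence preconnected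
    have hconv : Convex ℝ {y : Y | A s y = 1} := by
      intro a ha b hb t r ht hr htr
      simp only [Set.mem_setOf_eq] at ha hb ⊢
      rw [map_add, map_smul, map_smul, smul_eq_mul, smul_eq_mul, ha, hb,
        mul_one, mul_one, htr]
    have hT : IsPreconnected ({s} ×ˢ {y : Y | A s y = 1} : Set (S × Y)) :=
      isPreconnected_singleton.prod hconv.isPreconnected
    have hTsub : ({s} ×ˢ {y : Y | A s y = 1} : Set (S × Y)) ⊆
        {p : S × Y | A p.1 p.2 = 1} := by
      rintro ⟨t, y⟩ ⟨ht, hy⟩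
      simp only [Set.mem_singleton_iff] at ht
      subst ht
      exact hy
    obtain ⟨r, hrT, hru, hrv⟩ := hT u v hu hv (fun x hx => hcov (hTsub hx))
      ⟨(s, y₁), ⟨rfl, hy₁⟩, hy₁u⟩ ⟨(s, y₂), ⟨rfl, hy₂⟩, hy₂v⟩
    exact ⟨r, hTsub hrT, hru, hrv⟩
end

section
/- Let S be a topological space, Y a real topological vector space, and A: S → Y* weakly-star continuous. If the set {(s,y) ∈ S × Y : A(s)(y) = 1} is disconnected, then S \ A⁻¹(0) is disconnected. -/
/-- Let `S` be a topological space, `Y` a real topological vector space and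
`A : S → Y*` weakly-star continuous. If `{(s,y) : A(s)(y) = 1}` is
disconnected, then `S \ A⁻¹(0)` is disconnected. -/
theorem disconnected_base_of_disconnected_level_set
    (S : Type*) [TopologicalSpace S]
    (Y : Type*) [AddCommGroup Y] [Module ℝ Y] [TopologicalSpace Y]
    [IsTopologicalAddGroup Y] [ContinuousSMul ℝ Y]
    (A : S → WeakDual ℝ Y) (hA : Continuous A)
    (h : ¬ IsConnected {p : S × Y | A p.1 p.2 = 1}) :
    ¬ IsConnected {s : S | A s ≠ 0} := by
  contrapose! h
  obtain ⟨⟨s₀, hs₀⟩, hBpre⟩ := h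
  set T : Set (S × Y) := {p : S × Y | A p.1 p.2 = 1} with hT
  -- evaluation at a fixed vector is continuous in s
  have heval : ∀ y : Y, Continuous fun s => A s y := fun y =>
    (WeakDual.eval_continuous y).comp hA
  -- the normalized point lies in T
  have hmem : ∀ s (y : Y), A s y ≠ 0 → (s, (A s y)⁻¹ • y) ∈ T := by
    intro s y hy
    simp only [hT, Set.mem_setOf_eq, map_smul, smul_eq_mul]
    exact inv_mul_cancel₀ hy
  -- existence of a nonvanishing vector
  have hexists : ∀ s : S, A s ≠ 0 → ∃ y, A s y ≠ 0 := by
    intro s hs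
    by_contra hc
    push_neg at hc
    exact hs (ContinuousLinearMap.ext fun y => (hc y).trans rfl)
  constructor
  · obtain ⟨y, hy⟩ := hexists s₀ hs₀
    exact ⟨_, hmem s₀ y hy⟩
  · intro u v hu hv hcov ⟨pu, hpu⟩ ⟨pv, hpv⟩
    by_contra hne
    rw [Set.not_nonempty_iff_eq_empty] at hne
    -- base sets
    set Bu : Set S := {s | ∃ y : Y, A s y = 1 ∧ (s, y) ∈ u} with hBu
    set Bv : Set S := {s | ∃ y : Y, A s y = 1 ∧ (s, y) ∈ v} with hBv
    -- openness of Bu and Bv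
    have hopen : ∀ (w : Set S) (uu : Set (S × Y)), IsOpen uu →
        w = {s | ∃ y : Y, A s y = 1 ∧ (s, y) ∈ uu} → IsOpen w := by
      intro w uu huu hw
      rw [isOpen_iff_forall_mem_open]
      intro s hs
      rw [hw] at hs
      obtain ⟨y, hy1, hyu⟩ := hs
      set O : Set S := {s' | A s' y ≠ 0} with hO
      have hOopen : IsOpen O := isOpen_compl_iff.mpr
        ((isClosed_singleton.preimage (heval y)))
      set g : S → S × Y := fun s' => (s', (A s' y)⁻¹ • y) with hg
      have hgc : ContinuousOn g O := by
        apply ContinuousOn.prodMk continuousOn_id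
        exact (((heval y).continuousOn).inv₀ (fun s' hs' => hs')).smul continuousOn_const
      refine ⟨O ∩ g ⁻¹' uu, ?_, hgc.isOpen_inter_preimage hOopen huu, ?_, ?_⟩
      · rintro s' ⟨hs'O, hs'g⟩
        rw [hw]
        exact ⟨(A s' y)⁻¹ • y, by
          simpa [map_smul, smul_eq_mul] using inv_mul_cancel₀ hs'O, hs'g⟩
      · show A s y ≠ 0; rw [hy1]; exact one_ne_zero
      · show g s ∈ uu
        simp only [hg, hy1, inv_one, one_smul]
        exact hyu
    have hBuo : IsOpen Bu := hopen Bu u hu rfl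
    have hBvo : IsOpen Bv := hopen Bv v hv rfl
    -- covering
    have hcover : {s : S | A s ≠ 0} ⊆ Bu ∪ Bv := by
      intro s hs
      obtain ⟨y, hy⟩ := hexists s hs
      have hmem' := hmem s y hy
      have h1 : A s ((A s y)⁻¹ • y) = 1 := hmem'
      rcases hcov hmem' with huu | hvv
      · exact Or.inl ⟨_, h1, huu⟩
      · exact Or.inr ⟨_, h1, hvv⟩
    -- nonemptiness
    have hBmem : ∀ p : S × Y, p ∈ T → p.1 ∈ {s : S | A s ≠ 0} := by
      intro p hp hzero
      rw [hT, Set.mem_setOf_eq, hzero] at hp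
      exact one_ne_zero (hp.symm.trans rfl : (1:ℝ) = 0)
    have hBune : ({s : S | A s ≠ 0} ∩ Bu).Nonempty :=
      ⟨pu.1, hBmem pu hpu.1, ⟨pu.2, hpu.1, hpu.2⟩⟩
    have hBvne : ({s : S | A s ≠ 0} ∩ Bv).Nonempty :=
      ⟨pv.1, hBmem pv hpv.1, ⟨pv.2, hpv.1, hpv.2⟩⟩
    obtain ⟨s, _, hsu, hsv⟩ := hBpre Bu Bv hBuo hBvo hcover hBune hBvne
    -- contradiction: the fiber over s is convex hence preconnected
    obtain ⟨yu, hyu1, hyuu⟩ := hsu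
    obtain ⟨yv, hyv1, hyvv⟩ := hsv
    have hFconv : Convex ℝ {y : Y | A s y = 1} := by
      intro a ha b hb p q hp hq hpq
      simp only [Set.mem_setOf_eq] at ha hb ⊢
      simp [map_add, map_smul, ha, hb, hpq]
    have hFpre : IsPreconnected ((fun y : Y => (s, y)) '' {y : Y | A s y = 1}) :=
      hFconv.isPreconnected.image _ (Continuous.prodMk_right s).continuousOn
    have hsub : ((fun y : Y => (s, y)) '' {y : Y | A s y = 1}) ⊆ u ∪ v := by
      rintro _ ⟨y, hy, rfl⟩
      exact hcov hy
    obtain ⟨p, hpim, hpu', hpv'⟩ := hFpre u v hu hv hsub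
      ⟨(s, yu), ⟨yu, hyu1, rfl⟩, hyuu⟩ ⟨(s, yv), ⟨yv, hyv1, rfl⟩, hyvv⟩
    obtain ⟨y, hy, rfl⟩ := hpim
    have : (s, y) ∈ T ∩ (u ∩ v) := ⟨hy, hpu', hpv'⟩
    rw [hne] at this
    exact this
end

section
/- Let S be a connected topological space, Y a real topological vector space, and A: S → Y* weakly-star continuous with A(s) ≠ 0 for all s ∈ S. Then the set {(s,y) ∈ S × Y : A(s)(y) = 1} is connected. -/
/-- Let `S` be a connected topological space, `Y` a real topological vector
space and `A : S → Y*` weakly-star continuous with `A s ≠ 0` for all `s`.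
Then `{(s,y) : A(s)(y) = 1}` is connected. -/
theorem connected_level_set
    (S : Type*) [TopologicalSpace S] [ConnectedSpace S]
    (Y : Type*) [AddCommGroup Y] [Module ℝ Y] [TopologicalSpace Y]
    [IsTopologicalAddGroup Y] [ContinuousSMul ℝ Y]
    (A : S → WeakDual ℝ Y) (hA : Continuous A)
    (hA0 : ∀ s : S, A s ≠ 0) :
    IsConnected {p : S × Y | A p.1 p.2 = 1} := by
  set E : Set (S × Y) := {p : S × Y | A p.1 p.2 = 1} with hE
  have hfib : ∀ s : S, ∃ y : Y, A s y = 1 := by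
    intro s
    obtain ⟨y, hy⟩ : ∃ y, A s y ≠ 0 := by
      by_contra h; push_neg at h
      exact hA0 s (ContinuousLinearMap.ext fun y => (h y).trans rfl)
    exact ⟨(A s y)⁻¹ • y, by simp [map_smul, smul_eq_mul, inv_mul_cancel₀ hy]⟩
  have hconv : ∀ s : S, Convex ℝ {y : Y | A s y = 1} := by
    intro s y hy z hz a b ha hb hab
    simp only [Set.mem_setOf_eq] at *
    simp [map_add, map_smul, hy, hz, smul_eq_mul, hab]
  have heval : ∀ y : Y, Continuous fun s => A s y :=
    fun y => (WeakDual.eval_continuous y).comp hA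
  constructor
  · obtain ⟨s⟩ := ‹ConnectedSpace S›.toNonempty
    obtain ⟨y, hy⟩ := hfib s
    exact ⟨(s, y), hy⟩
  · rintro u v hu hv hcov ⟨pu, hpuE, hpu⟩ ⟨pv, hpvE, hpv⟩
    by_contra hne
    set T : Set S := {s | ∃ y, A s y = 1 ∧ (s, y) ∈ u} with hT
    set V : Set S := {s | ∃ y, A s y = 1 ∧ (s, y) ∈ v} with hV
    have hopen : ∀ w : Set (S × Y), IsOpen w →
        IsOpen {s | ∃ y, A s y = 1 ∧ (s, y) ∈ w} := by
      intro w hw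
      rw [isOpen_iff_mem_nhds]
      rintro s ⟨y, hy1, hyw⟩
      have h1 : ContinuousAt (fun t => (A t y)⁻¹ • y) s :=
        ContinuousAt.smul (((heval y).continuousAt).inv₀ (by simp [hy1]))
          continuousAt_const
      have hc : ContinuousAt (fun t => ((t : S), (A t y)⁻¹ • y)) s :=
        continuousAt_id.prodMk h1
      have hmem : ((s : S), (A s y)⁻¹ • y) ∈ w := by
        simpa [hy1] using hyw
      have hw' : ∀ᶠ t in nhds s, ((t : S), (A t y)⁻¹ • y) ∈ w :=
        hc.preimage_mem_nhds (hw.mem_nhds hmem)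
      have hnz : ∀ᶠ t in nhds s, A t y ≠ 0 :=
        (heval y).continuousAt.preimage_mem_nhds
          (isOpen_compl_singleton.mem_nhds (by simp [hy1]))
      filter_upwards [hw', hnz] with t htw htnz
      exact ⟨(A t y)⁻¹ • y, by simp [map_smul, smul_eq_mul, inv_mul_cancel₀ htnz], htw⟩
    have hTopen : IsOpen T := hopen u hu
    have hVopen : IsOpen V := hopen v hv
    have hcover : (Set.univ : Set S) ⊆ T ∪ V := by
      intro s _
      obtain ⟨y, hy⟩ := hfib s
      rcases hcov (show (s, y) ∈ E from hy) with h | h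
      · exact Or.inl ⟨y, hy, h⟩
      · exact Or.inr ⟨y, hy, h⟩
    have hTne : (Set.univ ∩ T).Nonempty :=
      ⟨pu.1, trivial, ⟨pu.2, hpuE, by simpa using hpu⟩⟩
    have hVne : (Set.univ ∩ V).Nonempty :=
      ⟨pv.1, trivial, ⟨pv.2, hpvE, by simpa using hpv⟩⟩
    obtain ⟨s, -, hsT, hsV⟩ := isPreconnected_univ T V hTopen hVopen hcover hTne hVne
    obtain ⟨yu, hyu1, hyuu⟩ := hsT
    obtain ⟨yv, hyv1, hyvv⟩ := hsV
    have hFpc : IsPreconnected {y : Y | A s y = 1} := (hconv s).isPreconnected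
    have hus : IsOpen (Prod.mk s ⁻¹' u) := hu.preimage (Continuous.prodMk_right s)
    have hvs : IsOpen (Prod.mk s ⁻¹' v) := hv.preimage (Continuous.prodMk_right s)
    have hsub : {y : Y | A s y = 1} ⊆ Prod.mk s ⁻¹' u ∪ Prod.mk s ⁻¹' v := by
      intro y hy
      rcases hcov (show (s, y) ∈ E from hy) with h | h
      · exact Or.inl h
      · exact Or.inr h
    obtain ⟨y, hy1, hyu, hyv⟩ := hFpc _ _ hus hvs hsub ⟨yu, hyu1, hyuu⟩ ⟨yv, hyv1, hyvv⟩
    exact hne ⟨(s, y), hy1, hyu, hyv⟩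
end
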